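/- The set { ∂_{ω}(x_2 x_3² ⋯ x_n^{n-1}) : ω ∈ S_n } is a basis of P_n = K[x_1,…,x_n] as a free module over the invariant subring P_n^{S_n}, where ∂_ω is the composition of Demazure operators along a reduced word for ω. -/

import Mathlib

open MvPolynomial

/-- `IsDemazure D`: `D i` is the Demazure operator `∂_{i+1}` (zero-based index `i`),
characterized by `D i P * (x_{i+2} - x_{i+1}) = P - s_{i+1}(P)`. -/
def IsDemazure {K : Type} [Field K] {n : ℕ}
    (D : Fin (n - 1) → MvPolynomial (Fin n) K → MvPolynomial (Fin n) K) : Prop :=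
  ∀ (i : Fin (n - 1)) (P : MvPolynomial (Fin n) K),
    D i P * (X (⟨i.val + 1, by have := i.isLt; omega⟩ : Fin n) -
        X (⟨i.val, by have := i.isLt; omega⟩ : Fin n)) =
      P - rename (Equiv.swap (⟨i.val, by have := i.isLt; omega⟩ : Fin n)
        (⟨i.val + 1, by have := i.isLt; omega⟩ : Fin n)) P

/-- The product of the simple transpositions `s_{i+1}` along a word `L`
(zero-based indices). -/
def wordProd {n : ℕ} (L : List (Fin (n - 1))) : Equiv.Perm (Fin n) :=
  (L.map (fun i => Equiv.swap (⟨i.val, by have := i.isLt; omega⟩ : Fin n)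
    (⟨i.val + 1, by have := i.isLt; omega⟩ : Fin n))).prod

/-- The number of inversions of a permutation, i.e. its Coxeter length. -/
def invCount {n : ℕ} (σ : Equiv.Perm (Fin n)) : ℕ :=
  (Finset.univ.filter (fun p : Fin n × Fin n => p.1 < p.2 ∧ σ p.2 < σ p.1)).card

set_option maxHeartbeats 1000000
set_option synthInstance.maxHeartbeats 400000
set_option linter.unusedSectionVars false
set_option linter.unusedVariables false
set_option linter.unnecessarySeqFocus false

namespace DemBasis

variable {n : ℕ}

/-- lower endpoint of the `i`-th adjacent transposition -/
def lo (i : Fin (n-1)) : Fin n := ⟨i.val, by have := i.isLt; omega⟩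
/-- upper endpoint -/
def hi (i : Fin (n-1)) : Fin n := ⟨i.val + 1, by have := i.isLt; omega⟩
/-- the `i`-th adjacent transposition -/
def sw (i : Fin (n-1)) : Equiv.Perm (Fin n) := Equiv.swap (lo i) (hi i)

@[simp] lemma lo_val (i : Fin (n-1)) : (lo i : Fin n).val = i.val := rfl
@[simp] lemma hi_val (i : Fin (n-1)) : (hi i : Fin n).val = i.val + 1 := rfl

lemma lo_ne_hi (i : Fin (n-1)) : lo i ≠ hi i := by
  simp [Fin.ext_iff]

lemma lo_lt_hi (i : Fin (n-1)) : (lo i : Fin n) < hi i := by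
  simp [Fin.lt_def]

@[simp] lemma sw_inv (i : Fin (n-1)) : (sw i)⁻¹ = sw i := by
  simp [sw]

@[simp] lemma sw_mul_sw_mul (i : Fin (n-1)) (σ : Equiv.Perm (Fin n)) :
    sw i * (sw i * σ) = σ := by
  simp [sw, ← mul_assoc]

lemma wordProd_nil : wordProd ([] : List (Fin (n-1))) = 1 := rfl

lemma wordProd_cons (t : Fin (n-1)) (L : List (Fin (n-1))) :
    wordProd (t :: L) = sw t * wordProd L := by
  simp [wordProd, sw, lo, hi]

lemma wordProd_append (L M : List (Fin (n-1))) :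
    wordProd (L ++ M) = wordProd L * wordProd M := by
  simp [wordProd]

lemma wordProd_reverse (L : List (Fin (n-1))) :
    wordProd L.reverse = (wordProd L)⁻¹ := by
  induction L with
  | nil => simp [wordProd]
  | cons t L ih =>
      rw [List.reverse_cons, wordProd_append, wordProd_cons, ih]
      simp [wordProd, sw, lo, hi, mul_inv_rev]

/-- inversion set -/
def InvSet (σ : Equiv.Perm (Fin n)) : Finset (Fin n × Fin n) :=
  Finset.univ.filter (fun p : Fin n × Fin n => p.1 < p.2 ∧ σ p.2 < σ p.1)

lemma invCount_eq (σ : Equiv.Perm (Fin n)) : invCount σ = (InvSet σ).card := rfl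

lemma swap_lt_swap_iff (t : Fin (n-1)) {x y : Fin n}
    (h1 : ¬(x = lo t ∧ y = hi t)) (h2 : ¬(x = hi t ∧ y = lo t)) :
    sw t x < sw t y ↔ x < y := by
  have ht := t.isLt
  have h1' : ¬(x.val = t.val ∧ y.val = t.val + 1) := by
    simpa [Fin.ext_iff] using h1
  have h2' : ¬(x.val = t.val + 1 ∧ y.val = t.val) := by
    simpa [Fin.ext_iff] using h2
  simp only [sw, Equiv.swap_apply_def, Fin.lt_def]
  split_ifs <;> (simp only [Fin.ext_iff, lo_val, hi_val] at *) <;> omega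

lemma invCount_swap_mul_of_asc (σ : Equiv.Perm (Fin n)) (t : Fin (n-1))
    (h : σ⁻¹ (lo t) < σ⁻¹ (hi t)) :
    invCount (sw t * σ) = invCount σ + 1 := by
  classical
  set q : Fin n × Fin n := (σ⁻¹ (lo t), σ⁻¹ (hi t)) with hq
  have hq1 : σ q.1 = lo t := Equiv.apply_symm_apply σ _
  have hq2 : σ q.2 = hi t := Equiv.apply_symm_apply σ _
  have hqmem : q ∉ InvSet σ := by
    simp only [InvSet, Finset.mem_filter, Finset.mem_univ, true_and, not_and]
    intro _
    rw [hq1, hq2]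
    exact (lo_lt_hi t).not_gt
  have key : InvSet (sw t * σ) = insert q (InvSet σ) := by
    ext p
    simp only [InvSet, Finset.mem_insert, Finset.mem_filter, Finset.mem_univ, true_and]
    simp only [Equiv.Perm.mul_apply]
    have c1gen : ∀ hh12 : p.1 < p.2, ¬(σ p.2 = lo t ∧ σ p.1 = hi t) := by
      rintro hh12 ⟨e2, e1⟩
      have hp2 : p.2 = σ⁻¹ (lo t) := by rw [← e2]; simp
      have hp1 : p.1 = σ⁻¹ (hi t) := by rw [← e1]; simp
      rw [hp1, hp2] at hh12
      exact absurd (lt_trans hh12 h) (lt_irrefl _)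
    constructor
    · rintro ⟨h12, hlt⟩
      by_cases hpq : p = q
      · exact Or.inl hpq
      · refine Or.inr ⟨h12, ?_⟩
        have c2 : ¬(σ p.2 = hi t ∧ σ p.1 = lo t) := by
          rintro ⟨e2, e1⟩
          apply hpq
          have hp2 : p.2 = σ⁻¹ (hi t) := by rw [← e2]; simp
          have hp1 : p.1 = σ⁻¹ (lo t) := by rw [← e1]; simp
          exact Prod.ext (by rw [hp1, hq]) (by rw [hp2, hq])
        exact (swap_lt_swap_iff t (c1gen h12) c2).mp hlt
    · rintro (rfl | ⟨h12, hlt⟩)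
      · refine ⟨h, ?_⟩
        rw [hq1, hq2]
        simp only [sw, Equiv.swap_apply_left, Equiv.swap_apply_right]
        exact lo_lt_hi t
      · refine ⟨h12, ?_⟩
        have c2 : ¬(σ p.2 = hi t ∧ σ p.1 = lo t) := by
          rintro ⟨e2, e1⟩
          rw [e2, e1] at hlt
          exact absurd hlt (lo_lt_hi t).not_gt
        exact (swap_lt_swap_iff t (c1gen h12) c2).mpr hlt
  rw [invCount_eq, invCount_eq, key, Finset.card_insert_of_notMem hqmem]

lemma invCount_swap_mul_of_desc (σ : Equiv.Perm (Fin n)) (t : Fin (n-1))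
    (h : σ⁻¹ (hi t) < σ⁻¹ (lo t)) :
    invCount σ = invCount (sw t * σ) + 1 := by
  have h' : (sw t * σ)⁻¹ (lo t) < (sw t * σ)⁻¹ (hi t) := by
    simp only [mul_inv_rev, sw_inv, Equiv.Perm.mul_apply]
    simpa [sw, Equiv.swap_apply_left, Equiv.swap_apply_right] using h
  have := invCount_swap_mul_of_asc (sw t * σ) t h'
  rwa [sw_mul_sw_mul] at this

lemma invCount_swap_mul_cases (σ : Equiv.Perm (Fin n)) (t : Fin (n-1)) :
    invCount (sw t * σ) = invCount σ + 1 ∨ invCount σ = invCount (sw t * σ) + 1 := by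
  rcases lt_trichotomy (σ⁻¹ (lo t)) (σ⁻¹ (hi t)) with h | h | h
  · exact Or.inl (invCount_swap_mul_of_asc σ t h)
  · exact absurd (σ⁻¹.injective h) (lo_ne_hi t)
  · exact Or.inr (invCount_swap_mul_of_desc σ t h)

lemma invCount_one : invCount (1 : Equiv.Perm (Fin n)) = 0 := by
  rw [invCount, Finset.card_eq_zero]
  ext p
  simp only [Finset.mem_filter, Finset.mem_univ, true_and, Finset.notMem_empty, iff_false,
    not_and]
  simp only [Equiv.Perm.one_apply]
  exact fun h => not_lt_of_gt h

/-- a strictly monotone permutation of `Fin n` is the identity -/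
lemma perm_eq_one_of_strictMono (σ : Equiv.Perm (Fin n))
    (h : ∀ a b : Fin n, a < b → σ a < σ b) : σ = 1 := by
  have key : ∀ k : ℕ, ∀ j : Fin n, j.val = k → σ j = j := by
    intro k
    induction k using Nat.strong_induction_on with
    | _ k IH =>
      intro j hj
      by_contra hne
      rcases lt_trichotomy (σ j) j with hlt | heq | hgt
      · have : σ (σ j) = σ j := IH (σ j).val (by omega) (σ j) rfl
        exact absurd (σ.injective this) (by intro e; rw [e] at hlt; exact lt_irrefl _ hlt)
      · exact hne heq
      · -- j is hit by some a; a < j gives σ a = a < j ≠ j; a = j excluded; a > j gives σ a > σ j > j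
        obtain ⟨a, ha⟩ := σ.surjective j
        rcases lt_trichotomy a j with h1 | h1 | h1
        · have : σ a = a := IH a.val (by omega) a rfl
          rw [this] at ha
          exact absurd ha (by intro e; rw [e] at h1; exact lt_irrefl _ h1)
        · rw [h1] at ha; exact hne ha
        · have := h j a h1
          rw [ha] at this
          exact absurd (lt_trans hgt this) (lt_irrefl _)
  ext j
  exact congrArg Fin.val (key j.val j rfl)

lemma exists_desc (σ : Equiv.Perm (Fin n)) (h : σ ≠ 1) :
    ∃ t : Fin (n-1), σ⁻¹ (hi t) < σ⁻¹ (lo t) := by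
  by_contra hc
  push_neg at hc
  have hasc : ∀ t : Fin (n-1), σ⁻¹ (lo t) < σ⁻¹ (hi t) := by
    intro t
    rcases lt_trichotomy (σ⁻¹ (lo t)) (σ⁻¹ (hi t)) with h1 | h1 | h1
    · exact h1
    · exact absurd (σ⁻¹.injective h1) (lo_ne_hi t)
    · exact absurd h1 (not_lt_of_ge (hc t))
  -- σ⁻¹ is strictly monotone
  have adj : ∀ a b : Fin n, b.val = a.val + 1 → σ⁻¹ a < σ⁻¹ b := by
    intro a b hb
    have ha : a.val < n - 1 := by have := b.isLt; omega
    have := hasc ⟨a.val, ha⟩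
    have e1 : lo ⟨a.val, ha⟩ = a := by simp [lo, Fin.ext_iff]
    have e2 : hi ⟨a.val, ha⟩ = b := by simp only [hi, Fin.ext_iff]; omega
    rwa [e1, e2] at this
  have step : ∀ (d : ℕ) (a b : Fin n), b.val = a.val + d + 1 → σ⁻¹ a < σ⁻¹ b := by
    intro d
    induction d with
    | zero => exact fun a b hb => adj a b (by omega)
    | succ d IH =>
        intro a b hb
        have hm : a.val + d + 1 < n := by have := b.isLt; omega
        exact lt_trans (IH a ⟨a.val + d + 1, hm⟩ rfl) (adj ⟨a.val + d + 1, hm⟩ b (by simp; omega))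
  have mono : ∀ a b : Fin n, a < b → σ⁻¹ a < σ⁻¹ b := by
    intro a b hab
    exact step (b.val - a.val - 1) a b (by have := Fin.lt_def.mp hab; omega)
  have : σ⁻¹ = 1 := perm_eq_one_of_strictMono σ⁻¹ mono
  exact h (by rw [← inv_inv σ, this, inv_one])

lemma exists_reduced (σ : Equiv.Perm (Fin n)) :
    ∃ L : List (Fin (n-1)), wordProd L = σ ∧ invCount σ = L.length := by
  suffices h : ∀ (k : ℕ) (σ : Equiv.Perm (Fin n)), invCount σ = k →
      ∃ L : List (Fin (n-1)), wordProd L = σ ∧ invCount σ = L.length from h _ σ rfl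
  intro k
  induction k using Nat.strong_induction_on with
  | _ k IH =>
    intro σ hk
    by_cases h1 : σ = 1
    · subst h1
      refine ⟨[], wordProd_nil, ?_⟩
      simp [invCount_one]
    · obtain ⟨t, ht⟩ := exists_desc σ h1
      have hd := invCount_swap_mul_of_desc σ t ht
      obtain ⟨L, hL1, hL2⟩ := IH (invCount (sw t * σ)) (by omega) (sw t * σ) rfl
      refine ⟨t :: L, ?_, ?_⟩
      · rw [wordProd_cons, hL1, sw_mul_sw_mul]
      · simp only [List.length_cons]
        omega

lemma invCount_inv (σ : Equiv.Perm (Fin n)) : invCount σ⁻¹ = invCount σ := by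
  rw [invCount_eq, invCount_eq]
  symm
  apply Finset.card_bij (fun p _ => ((σ p.2 : Fin n), (σ p.1 : Fin n)))
  · rintro p hp
    simp only [InvSet, Finset.mem_filter, Finset.mem_univ, true_and] at hp ⊢
    simp only [Equiv.Perm.inv_def, Equiv.symm_apply_apply]
    exact ⟨hp.2, hp.1⟩
  · rintro p hp p' hp' he
    simp only [Prod.mk.injEq] at he
    exact Prod.ext (σ.injective he.2) (σ.injective he.1)
  · rintro r hr
    simp only [InvSet, Finset.mem_filter, Finset.mem_univ, true_and] at hr
    refine ⟨(σ⁻¹ r.2, σ⁻¹ r.1), ?_, ?_⟩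
    · simp only [InvSet, Finset.mem_filter, Finset.mem_univ, true_and]
      refine ⟨hr.2, ?_⟩
      simp only [Equiv.Perm.inv_def, Equiv.apply_symm_apply]
      exact hr.1
    · simp [Equiv.Perm.inv_def]

/-- total number of ordered pairs `p.1 < p.2` -/
def NP (n : ℕ) : ℕ := (Finset.univ.filter (fun p : Fin n × Fin n => p.1 < p.2)).card

lemma invCount_le_NP (σ : Equiv.Perm (Fin n)) : invCount σ ≤ NP n := by
  apply Finset.card_le_card
  intro p hp
  simp only [Finset.mem_filter, Finset.mem_univ, true_and] at hp ⊢
  exact hp.1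

def w0 (n : ℕ) : Equiv.Perm (Fin n) := Fin.revPerm

lemma w0_apply (j : Fin n) : (w0 n) j = j.rev := rfl

lemma w0_val (j : Fin n) : ((w0 n) j).val = n - 1 - j.val := by
  have := j.isLt
  simp only [w0_apply, Fin.val_rev]
  omega

@[simp] lemma w0_inv : (w0 n)⁻¹ = w0 n := rfl

lemma invCount_w0 : invCount (w0 n) = NP n := by
  rw [invCount, NP]
  congr 1
  apply Finset.filter_congr
  intro p _
  simp only [and_iff_left_iff_imp]
  intro h
  have h1 := w0_val (n := n) p.1
  have h2 := w0_val (n := n) p.2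
  have := Fin.lt_def.mp h
  have := p.2.isLt
  rw [Fin.lt_def]
  omega

lemma eq_w0_of_invCount (σ : Equiv.Perm (Fin n)) (h : invCount σ = NP n) :
    σ = w0 n := by
  have hsub : InvSet σ ⊆ Finset.univ.filter (fun p : Fin n × Fin n => p.1 < p.2) := by
    intro p hp
    simp only [InvSet, Finset.mem_filter, Finset.mem_univ, true_and] at hp ⊢
    exact hp.1
  have heq : InvSet σ = Finset.univ.filter (fun p : Fin n × Fin n => p.1 < p.2) := by
    apply Finset.eq_of_subset_of_card_le hsub
    rw [← invCount_eq σ, h, NP]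
  have hanti : ∀ p1 p2 : Fin n, p1 < p2 → σ p2 < σ p1 := by
    intro p1 p2 hlt
    have : (p1, p2) ∈ InvSet σ := by
      rw [heq]
      simp [hlt]
    simp only [InvSet, Finset.mem_filter] at this
    exact this.2.2
  have hmono : ∀ a b : Fin n, a < b → (σ * w0 n) a < (σ * w0 n) b := by
    intro a b hab
    simp only [Equiv.Perm.mul_apply]
    apply hanti
    have h1 := w0_val (n := n) a
    have h2 := w0_val (n := n) b
    have h3 := Fin.lt_def.mp hab
    have h4 := b.isLt
    rw [Fin.lt_def]
    omega
  have h1 : σ * w0 n = 1 := perm_eq_one_of_strictMono _ hmono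
  have : σ = (w0 n)⁻¹ := mul_eq_one_iff_eq_inv.mp h1
  rwa [w0_inv] at this

lemma invCount_w0_mul (σ : Equiv.Perm (Fin n)) :
    invCount (w0 n * σ) + invCount σ = NP n := by
  classical
  have base_eq : ∀ τ : Equiv.Perm (Fin n), InvSet τ =
      (Finset.univ.filter (fun p : Fin n × Fin n => p.1 < p.2)).filter
        (fun p => τ p.2 < τ p.1) := by
    intro τ
    rw [InvSet, Finset.filter_filter]
  have hneg : InvSet (w0 n * σ) =
      (Finset.univ.filter (fun p : Fin n × Fin n => p.1 < p.2)).filter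
        (fun p => ¬ (σ p.2 < σ p.1)) := by
    rw [base_eq]
    apply Finset.filter_congr
    intro p hp
    simp only [Finset.mem_filter, Finset.mem_univ, true_and] at hp
    simp only [Equiv.Perm.mul_apply]
    have hne : σ p.1 ≠ σ p.2 := fun e => absurd (σ.injective e) (ne_of_lt hp)
    have h1 := w0_val (n := n) (σ p.1)
    have h2 := w0_val (n := n) (σ p.2)
    have := (σ p.1).isLt
    have := (σ p.2).isLt
    rw [Fin.lt_def, Fin.lt_def]
    rw [Fin.ne_iff_vne] at hne
    omega
  rw [invCount_eq, invCount_eq, hneg, base_eq σ, NP]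
  have := Finset.card_filter_add_card_filter_not
    (s := Finset.univ.filter (fun p : Fin n × Fin n => p.1 < p.2))
    (p := fun p : Fin n × Fin n => σ p.2 < σ p.1)
  omega

lemma invCount_mul_w0 (σ : Equiv.Perm (Fin n)) :
    invCount (σ * w0 n) + invCount σ = NP n := by
  have h1 : invCount (σ * w0 n) = invCount (w0 n * σ⁻¹) := by
    rw [← invCount_inv (σ * w0 n), mul_inv_rev, w0_inv]
  rw [h1, ← invCount_inv σ]
  exact invCount_w0_mul σ⁻¹

end DemBasis

set_option linter.unusedSectionVars false

namespace DemBasis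

variable {K : Type} [Field K] {n : ℕ}
variable {D : Fin (n-1) → MvPolynomial (Fin n) K → MvPolynomial (Fin n) K}
variable {Dw : Equiv.Perm (Fin n) → MvPolynomial (Fin n) K → MvPolynomial (Fin n) K}

lemma hD_eq (hD : IsDemazure D) (t : Fin (n-1)) (P : MvPolynomial (Fin n) K) :
    D t P * (X (hi t) - X (lo t)) = P - rename (sw t) P := hD t P

lemma X_sub_ne (t : Fin (n-1)) : (X (hi t) - X (lo t) : MvPolynomial (Fin n) K) ≠ 0 := by
  rw [sub_ne_zero]
  exact fun h => (lo_ne_hi t).symm (MvPolynomial.X_injective h)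

lemma D_unique (hD : IsDemazure D) (t : Fin (n-1)) {P Q : MvPolynomial (Fin n) K}
    (h : Q * (X (hi t) - X (lo t)) = P - rename (sw t) P) : D t P = Q := by
  apply mul_right_cancel₀ (X_sub_ne t)
  rw [hD_eq hD t P, h]

lemma sw_comp_sw (t : Fin (n-1)) : (sw t : Fin n → Fin n) ∘ (sw t : Fin n → Fin n) = id := by
  funext x
  simp [sw, Equiv.swap_apply_self]

lemma rename_sw_sw (t : Fin (n-1)) (P : MvPolynomial (Fin n) K) :
    rename (sw t) (rename (sw t) P) = P := by
  rw [rename_rename, sw_comp_sw, rename_id_apply]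

lemma D_swap_invariant (hD : IsDemazure D) (t : Fin (n-1)) (P : MvPolynomial (Fin n) K) :
    rename (sw t) (D t P) = D t P := by
  apply mul_right_cancel₀ (X_sub_ne t)
  have h0 := hD_eq hD t P
  have h1 := congrArg (rename (sw t)) h0
  rw [map_mul, map_sub, rename_X, rename_X, map_sub, rename_sw_sw] at h1
  have h2 : (sw t) (hi t) = lo t := by simp [sw, Equiv.swap_apply_right]
  have h3 : (sw t) (lo t) = hi t := by simp [sw, Equiv.swap_apply_left]
  rw [h2, h3] at h1
  -- h1 : rename (sw t) (D t P) * (X (lo t) - X (hi t)) = rename (sw t) P - P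
  have : rename (sw t) (D t P) * (X (hi t) - X (lo t)) = P - rename (sw t) P := by
    have := congrArg (fun z => -z) h1
    simp only [← mul_neg, neg_sub] at this
    exact this
  rw [this, h0]

lemma D_D (hD : IsDemazure D) (t : Fin (n-1)) (P : MvPolynomial (Fin n) K) :
    D t (D t P) = 0 := by
  apply D_unique hD t
  rw [D_swap_invariant hD t P]
  simp

lemma D_add (hD : IsDemazure D) (t : Fin (n-1)) (P Q : MvPolynomial (Fin n) K) :
    D t (P + Q) = D t P + D t Q := by
  apply D_unique hD t
  rw [add_mul, hD_eq hD t P, hD_eq hD t Q, map_add]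
  ring

lemma D_zero (hD : IsDemazure D) (t : Fin (n-1)) : D t (0 : MvPolynomial (Fin n) K) = 0 := by
  apply D_unique hD t
  simp

lemma D_mul (hD : IsDemazure D) (t : Fin (n-1)) (P Q : MvPolynomial (Fin n) K) :
    D t (P * Q) = D t P * Q + rename (sw t) P * D t Q := by
  apply D_unique hD t
  have h1 := hD_eq hD t P
  have h2 := hD_eq hD t Q
  rw [map_mul]
  calc (D t P * Q + rename (sw t) P * D t Q) * (X (hi t) - X (lo t))
      = (D t P * (X (hi t) - X (lo t))) * Q
          + rename (sw t) P * (D t Q * (X (hi t) - X (lo t))) := by ring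
    _ = (P - rename (sw t) P) * Q + rename (sw t) P * (Q - rename (sw t) Q) := by
          rw [h1, h2]
    _ = P * Q - rename (sw t) P * rename (sw t) Q := by ring

lemma D_invariant_eq_zero (hD : IsDemazure D) (t : Fin (n-1)) {f : MvPolynomial (Fin n) K}
    (hf : rename (sw t) f = f) : D t f = 0 := by
  apply D_unique hD t
  rw [hf]
  simp

lemma D_invariant_mul (hD : IsDemazure D) (t : Fin (n-1)) {f : MvPolynomial (Fin n) K}
    (hf : rename (sw t) f = f) (P : MvPolynomial (Fin n) K) :
    D t (f * P) = f * D t P := by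
  rw [D_mul hD, D_invariant_eq_zero hD t hf, hf, zero_mul, zero_add]

/-- symmetric polynomials are invariant for every adjacent swap -/
lemma symm_rename_sw {f : MvPolynomial (Fin n) K} (hf : f.IsSymmetric) (t : Fin (n-1)) :
    rename (sw t) f = f := hf (sw t)

section DwLemmas

variable (hD : IsDemazure D)
variable (hDw : ∀ (ω : Equiv.Perm (Fin n)) (L : List (Fin (n - 1))),
      wordProd L = ω → invCount ω = L.length →
      ∀ P, Dw ω P = L.foldr (fun i Q => D i Q) P)

include hD hDw

lemma Dw_one (P : MvPolynomial (Fin n) K) : Dw 1 P = P := by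
  rw [hDw 1 [] wordProd_nil (by rw [invCount_one]; rfl) P]
  rfl

lemma Dw_asc {t : Fin (n-1)} {ω : Equiv.Perm (Fin n)}
    (h : invCount (sw t * ω) = invCount ω + 1) (P : MvPolynomial (Fin n) K) :
    Dw (sw t * ω) P = D t (Dw ω P) := by
  obtain ⟨L, hL1, hL2⟩ := exists_reduced ω
  rw [hDw ω L hL1 hL2 P]
  rw [hDw (sw t * ω) (t :: L) (by rw [wordProd_cons, hL1])
    (by simp only [List.length_cons]; omega) P]
  rfl

lemma D_Dw_desc {t : Fin (n-1)} {ω : Equiv.Perm (Fin n)}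
    (h : invCount (sw t * ω) + 1 = invCount ω) (P : MvPolynomial (Fin n) K) :
    D t (Dw ω P) = 0 := by
  have hω : ω = sw t * (sw t * ω) := (sw_mul_sw_mul t ω).symm
  have hasc : invCount (sw t * (sw t * ω)) = invCount (sw t * ω) + 1 := by
    rw [sw_mul_sw_mul]; omega
  rw [hω, Dw_asc hD hDw hasc P, D_D hD]

omit hD hDw in
lemma invCount_wordProd_mul_le (L : List (Fin (n-1))) (v : Equiv.Perm (Fin n)) :
    invCount (wordProd L * v) ≤ L.length + invCount v := by
  induction L with
  | nil => simp [wordProd_nil]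
  | cons t L ih =>
      rw [wordProd_cons, mul_assoc]
      rcases invCount_swap_mul_cases (wordProd L * v) t with h | h <;>
        simp only [List.length_cons] <;> omega

/-- The key dichotomy: applying a chain of Demazure operators to `Dw v P`. -/
lemma foldr_dichotomy (L : List (Fin (n-1))) (v : Equiv.Perm (Fin n))
    (P : MvPolynomial (Fin n) K) :
    L.foldr (fun i Q => D i Q) (Dw v P) =
      if invCount (wordProd L * v) = L.length + invCount v
      then Dw (wordProd L * v) P else 0 := by
  induction L with
  | nil => simp [wordProd_nil]
  | cons t L ih =>
      have hbound := invCount_wordProd_mul_le L v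
      have hassoc : wordProd (t :: L) * v = sw t * (wordProd L * v) := by
        rw [wordProd_cons, mul_assoc]
      simp only [List.foldr_cons, List.length_cons]
      rw [ih]
      by_cases hc : invCount (wordProd L * v) = L.length + invCount v
      · rw [if_pos hc]
        rcases invCount_swap_mul_cases (wordProd L * v) t with h | h
        · rw [← Dw_asc hD hDw h P, ← hassoc, if_pos (by rw [hassoc]; omega)]
        · rw [D_Dw_desc hD hDw (by omega) P, if_neg (by rw [hassoc]; omega)]
      · rw [if_neg hc, D_zero hD, if_neg ?_]
        rcases invCount_swap_mul_cases (wordProd L * v) t with h | h <;>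
          rw [hassoc] <;> omega

/-- `Dw` along any permutation is additive. -/
lemma Dw_add (ω : Equiv.Perm (Fin n)) (P Q : MvPolynomial (Fin n) K) :
    Dw ω (P + Q) = Dw ω P + Dw ω Q := by
  obtain ⟨L, hL1, hL2⟩ := exists_reduced ω
  rw [hDw ω L hL1 hL2, hDw ω L hL1 hL2, hDw ω L hL1 hL2]
  clear hL1 hL2
  induction L with
  | nil => simp
  | cons t L ih => simp only [List.foldr_cons, ih, D_add hD]

lemma Dw_zero (ω : Equiv.Perm (Fin n)) : Dw ω (0 : MvPolynomial (Fin n) K) = 0 := by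
  obtain ⟨L, hL1, hL2⟩ := exists_reduced ω
  rw [hDw ω L hL1 hL2]
  clear hL1 hL2
  induction L with
  | nil => simp
  | cons t L ih => simp only [List.foldr_cons, ih, D_zero hD]

lemma Dw_symm_mul (ω : Equiv.Perm (Fin n)) {f : MvPolynomial (Fin n) K}
    (hf : f.IsSymmetric) (P : MvPolynomial (Fin n) K) :
    Dw ω (f * P) = f * Dw ω P := by
  obtain ⟨L, hL1, hL2⟩ := exists_reduced ω
  rw [hDw ω L hL1 hL2, hDw ω L hL1 hL2]
  clear hL1 hL2
  induction L with
  | nil => simp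
  | cons t L ih =>
      simp only [List.foldr_cons, ih]
      exact D_invariant_mul hD t (symm_rename_sw hf t) _

lemma Dw_sum {ι : Type*} (s : Finset ι) (ω : Equiv.Perm (Fin n))
    (f : ι → MvPolynomial (Fin n) K) :
    Dw ω (∑ i ∈ s, f i) = ∑ i ∈ s, Dw ω (f i) := by
  classical
  induction s using Finset.induction_on with
  | empty => simp [Dw_zero hD hDw]
  | insert a s hnotmem ih =>
      rw [Finset.sum_insert hnotmem, Finset.sum_insert hnotmem, Dw_add hD hDw, ih]

end DwLemmas

end DemBasis

namespace DemBasis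

variable {K : Type} [Field K] {n : ℕ}
variable {D : Fin (n-1) → MvPolynomial (Fin n) K → MvPolynomial (Fin n) K}
variable {Dw : Equiv.Perm (Fin n) → MvPolynomial (Fin n) K → MvPolynomial (Fin n) K}

/-! ### The explicit word for `w0` -/

/-- letters `m, m+1, …, j-1` (ascending), as elements of `Fin (n-1)` -/
def blockSeg (n m j : ℕ) : List (Fin (n-1)) :=
  (List.range (j-m)).filterMap
    (fun a => if h : m + a < n-1 then some (⟨m + a, h⟩ : Fin (n-1)) else none)

/-- concatenation of blocks -/
def fullW (n : ℕ) : ℕ → List (Fin (n-1))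
  | 0 => []
  | (m+1) => blockSeg n m (n-1) ++ fullW n m

lemma blockSeg_self (m : ℕ) : blockSeg n m m = [] := by
  unfold blockSeg
  rw [Nat.sub_self]
  rfl

lemma blockSeg_snoc (m j : ℕ) (hm : m ≤ j) (hj : j < n-1) :
    blockSeg n m (j+1) = blockSeg n m j ++ [⟨j, hj⟩] := by
  unfold blockSeg
  rw [show j + 1 - m = (j - m) + 1 from by omega, List.range_succ, List.filterMap_append]
  congr 1
  simp only [List.filterMap_cons, List.filterMap_nil]
  rw [dif_pos (show m + (j - m) < n - 1 from by omega)]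
  simp only [List.cons.injEq, and_true, Fin.mk.injEq]
  omega

lemma length_blockSeg (m j : ℕ) (hm : m ≤ j) (hj : j ≤ n-1) :
    (blockSeg n m j).length = j - m := by
  induction j, hm using Nat.le_induction with
  | base => rw [blockSeg_self, List.length_nil, Nat.sub_self]
  | succ j hmj ih =>
      rw [blockSeg_snoc m j hmj (by omega), List.length_append, ih (by omega),
        List.length_singleton]
      omega

lemma length_fullW (m : ℕ) (hm : m ≤ n-1) :
    (fullW n m).length = ∑ k ∈ Finset.range m, (n-1-k) := by
  induction m with
  | zero => simp [fullW]
  | succ m ih =>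
      rw [fullW, List.length_append, ih (by omega), Finset.sum_range_succ,
        length_blockSeg m (n-1) (by omega) le_rfl]
      omega

/-- value function of the partial product of blocks (on ℕ) -/
def rhoV (n m x : ℕ) : ℕ :=
  if x + min m (n-1) < n then x + min m (n-1) else n-1-x

lemma rhoV_lt (n m x : ℕ) (hx : x < n) : rhoV n m x < n := by
  unfold rhoV
  split_ifs <;> omega

/-- value function of one block's product (on ℕ) -/
def piV (n m j x : ℕ) : ℕ :=
  if min m (min j (n-1)) ≤ x ∧ x < min j (n-1) then x + 1
  else if x = min j (n-1) then min m (min j (n-1))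
  else x

lemma piV_lt (n m j x : ℕ) (hx : x < n) : piV n m j x < n := by
  unfold piV
  split_ifs <;> omega

lemma sw_val (t : Fin (n-1)) (x : Fin n) :
    (sw t x : Fin n).val =
      if x.val = t.val then t.val + 1 else if x.val = t.val + 1 then t.val else x.val := by
  simp only [sw, Equiv.swap_apply_def]
  split_ifs <;> (simp only [Fin.ext_iff, lo_val, hi_val] at *) <;> omega

lemma wordProd_blockSeg (m j : ℕ) (hm : m ≤ j) (hj : j ≤ n-1) (x : Fin n) :
    (wordProd (blockSeg n m j) x).val = piV n m j x.val := by
  induction j, hm using Nat.le_induction generalizing x with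
  | base =>
      rw [blockSeg_self, wordProd_nil]
      have hx := x.isLt
      unfold piV
      simp only [Equiv.Perm.one_apply]
      split_ifs <;> omega
  | succ j hmj ih =>
      have hsw : wordProd [(⟨j, by omega⟩ : Fin (n-1))] = sw ⟨j, by omega⟩ := by
        rw [show [(⟨j, by omega⟩ : Fin (n-1))] = (⟨j, by omega⟩ : Fin (n-1)) :: [] from rfl,
          wordProd_cons, wordProd_nil, mul_one]
      rw [blockSeg_snoc m j hmj (by omega), wordProd_append, hsw, Equiv.Perm.mul_apply,
        ih (by omega), sw_val]
      have hx := x.isLt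
      show piV n m j (if x.val = j then j + 1 else if x.val = j + 1 then j else x.val)
        = piV n m (j+1) x.val
      unfold piV
      split_ifs <;> omega

lemma wordProd_fullW (m : ℕ) (hm : m ≤ n-1) (x : Fin n) :
    (wordProd (fullW n m) x).val = rhoV n m x.val := by
  induction m generalizing x with
  | zero =>
      rw [fullW, wordProd_nil]
      have hx := x.isLt
      unfold rhoV
      simp only [Equiv.Perm.one_apply]
      split_ifs <;> omega
  | succ m ih =>
      rw [fullW, wordProd_append, Equiv.Perm.mul_apply,
        wordProd_blockSeg m (n-1) (by omega) le_rfl]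
      rw [ih (by omega)]
      have hx := x.isLt
      have h1 := rhoV_lt n m x.val hx
      unfold piV rhoV
      unfold rhoV at h1
      split_ifs at * <;> omega

lemma wordProd_fullW_w0 : wordProd (fullW n (n-1)) = w0 n := by
  apply Equiv.ext
  intro x
  apply Fin.ext
  rw [wordProd_fullW (n-1) le_rfl x, w0_val]
  have hx := x.isLt
  unfold rhoV
  split_ifs <;> omega

lemma NP_eq_sum : NP n = ∑ j ∈ Finset.range n, j := by
  rw [NP]
  rw [Finset.card_eq_sum_card_fiberwise
    (f := fun p : Fin n × Fin n => p.2) (t := Finset.univ) (fun x _ => Finset.mem_univ _)]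
  rw [← Fin.sum_univ_eq_sum_range (fun j => j) n]
  apply Finset.sum_congr rfl
  intro b _
  rw [← Fin.card_Iio b]
  apply Finset.card_bij (fun p _ => p.1)
  · intro p hp
    simp only [Finset.mem_filter, Finset.mem_univ, true_and] at hp
    rw [Finset.mem_Iio, ← hp.2]
    exact hp.1
  · intro p hp p' hp' he
    simp only [Finset.mem_filter, Finset.mem_univ, true_and] at hp hp'
    exact Prod.ext he (hp.2.trans hp'.2.symm)
  · intro a ha
    rw [Finset.mem_Iio] at ha
    exact ⟨(a, b), by simp [ha], rfl⟩

lemma length_fullW_eq_NP : (fullW n (n-1)).length = NP n := by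
  rw [length_fullW (n-1) le_rfl, NP_eq_sum]
  have h2 := Finset.sum_range_reflect (fun j => j) n
  rcases Nat.eq_zero_or_pos n with h | h
  · subst h; simp
  · rw [← h2, show n = (n-1) + 1 from by omega, Finset.sum_range_succ]
    simp only [show (n-1) + 1 - 1 = n - 1 from by omega]
    rw [Nat.sub_self]
    omega

/-! ### The staircase monomial computation -/

/-- the exponent vectors appearing in the computation -/
noncomputable def Bf (n m k : ℕ) : Fin n →₀ ℕ :=
  Finsupp.equivFunOnFinite.symm (fun j => if j.val < k then j.val - m else j.val - 1 - m)

lemma Bf_apply (m k : ℕ) (j : Fin n) :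
    Bf n m k j = if j.val < k then j.val - m else j.val - 1 - m := rfl

lemma D_monomial_step (hD : IsDemazure D) (t : Fin (n-1)) {E E' : Fin n →₀ ℕ}
    (h1 : E = E' + Finsupp.single (hi t) 1)
    (h2 : Finsupp.mapDomain (sw t) E = E' + Finsupp.single (lo t) 1) :
    D t (monomial E (1 : K)) = monomial E' 1 := by
  apply D_unique hD t
  have hx : ∀ a : Fin n, (monomial E' (1:K)) * X a = monomial (E' + Finsupp.single a 1) 1 := by
    intro a
    rw [X, monomial_mul, mul_one]
  rw [mul_sub, hx, hx, rename_monomial, ← h1, ← h2]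

lemma sw_symm (t : Fin (n-1)) : (sw t).symm = sw t := by
  simp [sw]

lemma step_block (hD : IsDemazure D) (m j : ℕ) (hm : m ≤ j) (hj : j < n-1) :
    D ⟨j, hj⟩ (monomial (Bf n m (j+2)) (1:K)) = monomial (Bf n m (j+1)) 1 := by
  set t : Fin (n-1) := ⟨j, hj⟩ with hts
  have htv : t.val = j := rfl
  apply D_monomial_step hD
  · ext x
    have hx := x.isLt
    rw [Finsupp.add_apply, Bf_apply, Bf_apply, Finsupp.single_apply]
    have hcond : ((hi t : Fin n) = x) ↔ (j + 1 = x.val) := by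
      rw [Fin.ext_iff, hi_val, htv]
    simp only [hcond]
    split_ifs <;> omega
  · ext x
    have hx := x.isLt
    rw [Finsupp.mapDomain_equiv_apply, sw_symm, Finsupp.add_apply, Finsupp.single_apply]
    have hcond : ((lo t : Fin n) = x) ↔ (j = x.val) := by
      rw [Fin.ext_iff, lo_val, htv]
    rw [Bf_apply, Bf_apply]
    have hswv := sw_val t x
    rw [htv] at hswv
    -- condition of LHS involves (sw t x).val
    simp only [hcond, hswv]
    split_ifs <;> omega

lemma foldr_blockSeg (hD : IsDemazure D) (m : ℕ) (d : ℕ) (hd : m + d ≤ n-1) :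
    (blockSeg n m (m+d)).foldr (fun i Q => D i Q) (monomial (Bf n m (m+d+1)) (1:K))
      = monomial (Bf n m (m+1)) 1 := by
  induction d with
  | zero => simp only [Nat.add_zero, blockSeg_self, List.foldr_nil]
  | succ d ih =>
      rw [show m + (d+1) = (m+d) + 1 from by omega,
        blockSeg_snoc m (m+d) (by omega) (by omega), List.foldr_append]
      simp only [List.foldr_cons, List.foldr_nil]
      rw [show m + d + 1 + 1 = m + d + 2 from rfl,
        step_block hD m (m+d) (by omega) (by omega)]
      exact ih (by omega)

lemma Bf_shift (m : ℕ) : Bf n m (m+1) = Bf n (m+1) n := by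
  ext x
  have hx := x.isLt
  simp only [Bf_apply]
  split_ifs <;> omega

lemma foldr_fullW (hD : IsDemazure D) (m : ℕ) (hm : m ≤ n-1) :
    (fullW n m).foldr (fun i Q => D i Q) (monomial (Bf n 0 n) (1:K))
      = monomial (Bf n m n) 1 := by
  induction m with
  | zero => rfl
  | succ m ih =>
      rw [fullW, List.foldr_append, ih (by omega), ← Bf_shift]
      have h3 := foldr_blockSeg hD m (n-1-m) (by omega)
      rw [show m + (n-1-m) = n-1 from by omega] at h3
      rw [show (Bf n m n) = Bf n m (n-1+1) from by rw [show n-1+1 = n from by omega]]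
      exact h3

lemma staircase_eq : (∏ i : Fin n, (X i : MvPolynomial (Fin n) K) ^ i.val)
    = monomial (Bf n 0 n) 1 := by
  have h1 : ∀ i : Fin n, (Bf n 0 n) i = i.val := by
    intro i
    simp [Bf_apply, i.isLt]
  have h2 : ∏ x ∈ (Bf n 0 n).support, (X x : MvPolynomial (Fin n) K) ^ (Bf n 0 n) x
       = ∏ x : Fin n, (X x : MvPolynomial (Fin n) K) ^ (Bf n 0 n) x :=
    Finset.prod_subset (Finset.subset_univ _) (fun x _ hx => by
      rw [Finsupp.notMem_support_iff.mp hx, pow_zero])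
  rw [← prod_X_pow_eq_monomial, h2]
  exact Finset.prod_congr rfl (fun i _ => by rw [h1 i])

lemma Bf_top : Bf n (n-1) n = 0 := by
  ext x
  have hx := x.isLt
  simp only [Bf_apply, Finsupp.coe_zero, Pi.zero_apply]
  split_ifs <;> omega

section Sw0

variable (hD : IsDemazure D)
variable (hDw : ∀ (ω : Equiv.Perm (Fin n)) (L : List (Fin (n - 1))),
      wordProd L = ω → invCount ω = L.length →
      ∀ P, Dw ω P = L.foldr (fun i Q => D i Q) P)

include hD hDw

/-- **The key computation**: `∂_{w₀}` of the staircase monomial is `1`. -/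
lemma Dw_w0_staircase :
    Dw (w0 n) (∏ i : Fin n, (X i : MvPolynomial (Fin n) K) ^ i.val) = 1 := by
  rw [hDw (w0 n) (fullW n (n-1)) wordProd_fullW_w0
    (by rw [invCount_w0, length_fullW_eq_NP])]
  rw [staircase_eq, foldr_fullW hD (n-1) le_rfl, Bf_top]
  rw [monomial_zero', C_1]

end Sw0

end DemBasis

namespace DemBasis

variable {K : Type} [Field K] {n : ℕ}
variable {D : Fin (n-1) → MvPolynomial (Fin n) K → MvPolynomial (Fin n) K}
variable {Dw : Equiv.Perm (Fin n) → MvPolynomial (Fin n) K → MvPolynomial (Fin n) K}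

/-- the staircase monomial -/
noncomputable def stair (n : ℕ) (K : Type) [Field K] : MvPolynomial (Fin n) K :=
  ∏ i : Fin n, (X i : MvPolynomial (Fin n) K) ^ i.val

lemma invCount_sw_one (t : Fin (n-1)) : invCount (sw t : Equiv.Perm (Fin n)) = 1 := by
  have h := invCount_swap_mul_of_asc 1 t (by
    simp only [inv_one, Equiv.Perm.one_apply]
    exact lo_lt_hi t)
  rwa [mul_one, invCount_one] at h

lemma invCount_sw_mul_w0 (t : Fin (n-1)) :
    invCount (sw t * w0 n) + 1 = NP n := by
  rcases invCount_swap_mul_cases (w0 n) t with h | h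
  · have h2 := invCount_le_NP (sw t * w0 n)
    rw [invCount_w0] at h
    omega
  · rw [invCount_w0] at h
    omega

lemma invCount_w0_mul_sw (t : Fin (n-1)) :
    invCount (w0 n * sw t) + 1 = NP n := by
  have h := invCount_w0_mul (sw t : Equiv.Perm (Fin n))
  rw [invCount_sw_one] at h
  omega

section PairSection

variable (hD : IsDemazure D)
variable (hDw : ∀ (ω : Equiv.Perm (Fin n)) (L : List (Fin (n - 1))),
      wordProd L = ω → invCount ω = L.length →
      ∀ P, Dw ω P = L.foldr (fun i Q => D i Q) P)

include hD hDw

/-- `∂_{w0}` factors through any `D t` on the right. -/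
lemma Dw_w0_factor_right (t : Fin (n-1)) :
    ∃ L : List (Fin (n-1)), ∀ Z : MvPolynomial (Fin n) K,
      Dw (w0 n) Z = L.foldr (fun i Q => D i Q) (D t Z) := by
  obtain ⟨L, hL1, hL2⟩ := exists_reduced (w0 n * sw t)
  refine ⟨L, fun Z => ?_⟩
  have hsw : wordProd [t] = sw t := by
    rw [show [t] = t :: ([] : List (Fin (n-1))) from rfl, wordProd_cons, wordProd_nil, mul_one]
  have hword : wordProd (L ++ [t]) = w0 n := by
    rw [wordProd_append, hsw, hL1, mul_assoc]
    have : sw t * sw t = 1 := by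
      rw [sw]
      exact Equiv.swap_mul_self _ _
    rw [this, mul_one]
  have hlen : invCount (w0 n) = (L ++ [t]).length := by
    rw [List.length_append, List.length_singleton, invCount_w0, ← hL2]
    have := invCount_w0_mul_sw (n := n) t
    omega
  rw [hDw (w0 n) (L ++ [t]) hword hlen Z, List.foldr_append]
  rfl

/-- `∂_{w0}` factors through any `D t` on the left. -/
lemma Dw_w0_eq_D_Dw (t : Fin (n-1)) (Z : MvPolynomial (Fin n) K) :
    Dw (w0 n) Z = D t (Dw (sw t * w0 n) Z) := by
  have hasc : invCount (sw t * (sw t * w0 n)) = invCount (sw t * w0 n) + 1 := by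
    rw [sw_mul_sw_mul, invCount_w0]
    have := invCount_sw_mul_w0 (n := n) t
    omega
  have := Dw_asc hD hDw hasc Z
  rwa [sw_mul_sw_mul] at this

lemma Dw_w0_sw_invariant (t : Fin (n-1)) (Z : MvPolynomial (Fin n) K) :
    rename (sw t) (Dw (w0 n) Z) = Dw (w0 n) Z := by
  rw [Dw_w0_eq_D_Dw hD hDw t Z]
  exact D_swap_invariant hD t _

omit hD hDw in
lemma invariant_all_sw_isSymmetric {p : MvPolynomial (Fin n) K}
    (hp : ∀ t, rename (sw t) p = p) : p.IsSymmetric := by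
  have key : ∀ L : List (Fin (n-1)), rename (wordProd L) p = p := by
    intro L
    induction L with
    | nil => rw [wordProd_nil]; simp [rename_id]
    | cons t L ih =>
        rw [wordProd_cons, Equiv.Perm.coe_mul, ← rename_rename, ih, hp t]
  intro σ
  obtain ⟨L, hL, -⟩ := exists_reduced σ
  rw [← hL]
  exact key L

lemma Dw_w0_isSymmetric (Z : MvPolynomial (Fin n) K) : (Dw (w0 n) Z).IsSymmetric :=
  invariant_all_sw_isSymmetric (fun t => Dw_w0_sw_invariant hD hDw t Z)

/-- the `Λ`-bilinear pairing `⟨P,Q⟩ = ∂_{w0}(PQ)` is self-adjoint for each `D t`. -/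
lemma pair_adjoint (t : Fin (n-1)) (P Q : MvPolynomial (Fin n) K) :
    Dw (w0 n) (D t P * Q) = Dw (w0 n) (P * D t Q) := by
  obtain ⟨L, hL⟩ := Dw_w0_factor_right hD hDw t
  rw [hL, hL]
  congr 1
  rw [D_mul hD, D_mul hD, D_swap_invariant hD, D_D hD, zero_mul, zero_add, D_D hD,
    mul_zero, add_zero]

lemma pair_foldr (L : List (Fin (n-1))) (P Q : MvPolynomial (Fin n) K) :
    Dw (w0 n) (L.foldr (fun i Q => D i Q) P * Q)
      = Dw (w0 n) (P * L.reverse.foldr (fun i Q => D i Q) Q) := by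
  induction L generalizing Q with
  | nil => simp
  | cons t L ih =>
      simp only [List.foldr_cons, List.reverse_cons]
      rw [pair_adjoint hD hDw t, ih (D t Q), List.foldr_append]
      rfl

/-- **Orthogonality of Schubert-type elements**. -/
lemma pair_S_S (u w : Equiv.Perm (Fin n)) :
    Dw (w0 n) (Dw u (stair n K) * Dw w (stair n K)) =
      if invCount (u⁻¹ * w) = invCount u + invCount w
      then Dw (w0 n) (stair n K * Dw (u⁻¹ * w) (stair n K)) else 0 := by
  obtain ⟨L, hL1, hL2⟩ := exists_reduced u
  rw [hDw u L hL1 hL2 (stair n K), pair_foldr hD hDw]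
  rw [foldr_dichotomy hD hDw L.reverse w (stair n K)]
  rw [wordProd_reverse, hL1, List.length_reverse, ← hL2]
  by_cases hc : invCount (u⁻¹ * w) = invCount u + invCount w
  · rw [if_pos hc, if_pos hc]
  · rw [if_neg hc, if_neg hc, mul_zero, Dw_zero hD hDw]

lemma Dw_w0_stair : Dw (w0 n) (stair n K) = 1 := by
  unfold stair
  exact Dw_w0_staircase hD hDw

lemma pair_S_S_diag (u : Equiv.Perm (Fin n)) :
    Dw (w0 n) (Dw u (stair n K) * Dw (u * w0 n) (stair n K)) = 1 := by
  rw [pair_S_S hD hDw]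
  have he : u⁻¹ * (u * w0 n) = w0 n := by group
  have hcond : invCount (u⁻¹ * (u * w0 n)) = invCount u + invCount (u * w0 n) := by
    rw [he, invCount_w0]
    have := invCount_mul_w0 (n := n) u
    omega
  rw [if_pos hcond, he, Dw_w0_stair hD hDw, mul_one]
  exact Dw_w0_stair hD hDw

/-- vanishing off the antidiagonal, in the only case that matters -/
lemma pair_S_S_cond_length {u w : Equiv.Perm (Fin n)}
    (hc : invCount (u⁻¹ * w) = invCount u + invCount w) :
    invCount u + invCount w ≤ NP n ∧ (invCount u + invCount w = NP n → w = u * w0 n) := by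
  constructor
  · rw [← hc]; exact invCount_le_NP _
  · intro he
    have : invCount (u⁻¹ * w) = NP n := by omega
    have h2 := eq_w0_of_invCount _ this
    rw [← h2]
    group

end PairSection

end DemBasis

namespace DemBasis

variable {K : Type} [Field K] {n : ℕ}

section Galois

variable (K n)

/-- the action of a permutation on the fraction field of the polynomial ring -/
noncomputable def permFrac (g : Equiv.Perm (Fin n)) :
    FractionRing (MvPolynomial (Fin n) K) ≃+* FractionRing (MvPolynomial (Fin n) K) :=
  IsFractionRing.ringEquivOfRingEquiv (MvPolynomial.renameEquiv K g).toRingEquiv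

variable {K n}

lemma permFrac_algebraMap (g : Equiv.Perm (Fin n)) (a : MvPolynomial (Fin n) K) :
    permFrac K n g (algebraMap _ _ a) = algebraMap _ _ (rename g a) := by
  unfold permFrac
  rw [IsFractionRing.ringEquivOfRingEquiv_algebraMap]
  rfl

lemma permFrac_one_apply (x : FractionRing (MvPolynomial (Fin n) K)) :
    permFrac K n 1 x = x := by
  have h : (permFrac K n (1 : Equiv.Perm (Fin n))).toRingHom
      = RingHom.id (FractionRing (MvPolynomial (Fin n) K)) := by
    apply IsLocalization.ringHom_ext (nonZeroDivisors (MvPolynomial (Fin n) K))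
    apply RingHom.ext
    intro a
    simp only [RingHom.comp_apply, RingEquiv.toRingHom_eq_coe, RingHom.coe_coe,
      RingHom.id_apply]
    rw [permFrac_algebraMap]
    congr 1
    rw [Equiv.Perm.coe_one, rename_id_apply]
  have := RingHom.congr_fun h x
  simpa using this

lemma permFrac_mul_apply (g h : Equiv.Perm (Fin n))
    (x : FractionRing (MvPolynomial (Fin n) K)) :
    permFrac K n (g * h) x = permFrac K n g (permFrac K n h x) := by
  have hh : (permFrac K n (g * h)).toRingHom
      = ((permFrac K n g).toRingHom).comp ((permFrac K n h).toRingHom) := by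
    apply IsLocalization.ringHom_ext (nonZeroDivisors (MvPolynomial (Fin n) K))
    apply RingHom.ext
    intro a
    simp only [RingHom.comp_apply, RingEquiv.toRingHom_eq_coe, RingHom.coe_coe]
    rw [permFrac_algebraMap, permFrac_algebraMap, permFrac_algebraMap]
    congr 1
    rw [Equiv.Perm.coe_mul, ← rename_rename]
  have := RingHom.congr_fun hh x
  simpa using this

noncomputable instance galAct :
    MulSemiringAction (Equiv.Perm (Fin n)) (FractionRing (MvPolynomial (Fin n) K)) where
  smul g x := permFrac K n g x
  one_smul x := permFrac_one_apply x
  mul_smul g h x := permFrac_mul_apply g h x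
  smul_zero g := map_zero (permFrac K n g)
  smul_add g x y := map_add (permFrac K n g) x y
  smul_one g := map_one (permFrac K n g)
  smul_mul g x y := map_mul (permFrac K n g) x y

lemma galAct_smul_def (g : Equiv.Perm (Fin n)) (x : FractionRing (MvPolynomial (Fin n) K)) :
    g • x = permFrac K n g x := rfl

lemma smul_algebraMap' (g : Equiv.Perm (Fin n)) (a : MvPolynomial (Fin n) K) :
    g • (algebraMap (MvPolynomial (Fin n) K) (FractionRing (MvPolynomial (Fin n) K)) a)
      = algebraMap _ _ (rename g a) := permFrac_algebraMap g a

instance galFaithful :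
    FaithfulSMul (Equiv.Perm (Fin n)) (FractionRing (MvPolynomial (Fin n) K)) := by
  constructor
  intro g g' h
  apply Equiv.ext
  intro i
  have := h (algebraMap (MvPolynomial (Fin n) K) _ (X i))
  rw [smul_algebraMap', smul_algebraMap'] at this
  have h2 := IsFractionRing.injective (MvPolynomial (Fin n) K)
    (FractionRing (MvPolynomial (Fin n) K)) this
  rw [rename_X, rename_X] at h2
  exact MvPolynomial.X_injective h2

lemma symmetric_of_fixed {x : FractionRing (MvPolynomial (Fin n) K)}
    (hx : ∀ g : Equiv.Perm (Fin n), g • x = x) {p : MvPolynomial (Fin n) K}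
    (hp : algebraMap _ _ p = x) : p.IsSymmetric := by
  intro σ
  apply IsFractionRing.injective (MvPolynomial (Fin n) K)
    (FractionRing (MvPolynomial (Fin n) K))
  rw [← smul_algebraMap' σ p, hp, hx σ]

lemma symmetric_smul_fixed {p : MvPolynomial (Fin n) K} (hp : p.IsSymmetric)
    (g : Equiv.Perm (Fin n)) :
    g • (algebraMap (MvPolynomial (Fin n) K) (FractionRing (MvPolynomial (Fin n) K)) p)
      = algebraMap _ _ p := by
  rw [smul_algebraMap', hp g]

/-- clearing denominators against the symmetric subring, using the norm trick -/
lemma clear_denominators (c : Equiv.Perm (Fin n) → FractionRing (MvPolynomial (Fin n) K))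
    (hc : ∀ v (g : Equiv.Perm (Fin n)), g • c v = c v) :
    ∃ (s : MvPolynomial (Fin n) K) (q : Equiv.Perm (Fin n) → MvPolynomial (Fin n) K),
      s.IsSymmetric ∧ s ≠ 0 ∧ (∀ v, (q v).IsSymmetric) ∧
      ∀ v, algebraMap _ (FractionRing (MvPolynomial (Fin n) K)) s * c v
        = algebraMap _ _ (q v) := by
  classical
  obtain ⟨b, hb⟩ := IsLocalization.exist_integer_multiples_of_finite
    (nonZeroDivisors (MvPolynomial (Fin n) K)) c
  choose p hp using hb
  set Nb : MvPolynomial (Fin n) K := ∏ g : Equiv.Perm (Fin n), rename g (b : MvPolynomial (Fin n) K)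
    with hNb
  have hb0 : (b : MvPolynomial (Fin n) K) ≠ 0 :=
    nonZeroDivisors.ne_zero b.2
  have hNb0 : Nb ≠ 0 := by
    rw [hNb]
    rw [Finset.prod_ne_zero_iff]
    intro g _
    intro hz
    exact hb0 (by
      have := (MvPolynomial.rename_injective (R := K) (g : Fin n → Fin n) g.injective)
      exact this (by rw [hz, map_zero]))
  have hNbSym : Nb.IsSymmetric := by
    intro σ
    rw [hNb, map_prod]
    have : ∀ g : Equiv.Perm (Fin n),
        rename σ (rename g (b : MvPolynomial (Fin n) K)) = rename (σ * g) (b : MvPolynomial (Fin n) K) := by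
      intro g
      rw [Equiv.Perm.coe_mul, ← rename_rename]
    simp only [this]
    exact Equiv.prod_comp (Equiv.mulLeft σ) (fun g => rename g (b : MvPolynomial (Fin n) K))
  have hsplit : Nb = (b : MvPolynomial (Fin n) K)
      * ∏ g ∈ Finset.univ.erase (1 : Equiv.Perm (Fin n)), rename g (b : MvPolynomial (Fin n) K) := by
    rw [hNb, ← Finset.mul_prod_erase Finset.univ _ (Finset.mem_univ (1 : Equiv.Perm (Fin n)))]
    congr 1
    rw [Equiv.Perm.coe_one, rename_id_apply]
  set rest : MvPolynomial (Fin n) K :=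
    ∏ g ∈ Finset.univ.erase (1 : Equiv.Perm (Fin n)), rename g (b : MvPolynomial (Fin n) K)
  refine ⟨Nb, fun v => rest * p v, hNbSym, hNb0, ?_, ?_⟩
  · intro v
    apply symmetric_of_fixed (x := algebraMap _ (FractionRing (MvPolynomial (Fin n) K)) (rest * p v))
      ?_ rfl
    intro g
    have key : algebraMap _ (FractionRing (MvPolynomial (Fin n) K)) (rest * p v)
        = algebraMap _ _ Nb * c v := by
      rw [map_mul, hsplit, map_mul, mul_comm (algebraMap _ _ (b : MvPolynomial (Fin n) K)), mul_assoc]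
      congr 1
      rw [hp v, Algebra.smul_def]
    rw [key, smul_mul', symmetric_smul_fixed hNbSym, hc v g]
  · intro v
    have key : algebraMap _ (FractionRing (MvPolynomial (Fin n) K)) (rest * p v)
        = algebraMap _ _ Nb * c v := by
      rw [map_mul, hsplit, map_mul, mul_comm (algebraMap _ _ (b : MvPolynomial (Fin n) K)), mul_assoc]
      congr 1
      rw [hp v, Algebra.smul_def]
    rw [key]

end Galois

end DemBasis

namespace DemBasis

variable {K : Type} [Field K] {n : ℕ}
variable {D : Fin (n-1) → MvPolynomial (Fin n) K → MvPolynomial (Fin n) K}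
variable {Dw : Equiv.Perm (Fin n) → MvPolynomial (Fin n) K → MvPolynomial (Fin n) K}

lemma isSymm_sub {p q : MvPolynomial (Fin n) K} (hp : p.IsSymmetric) (hq : q.IsSymmetric) :
    (p - q).IsSymmetric := fun e => by rw [map_sub, hp e, hq e]

lemma isSymm_mul {p q : MvPolynomial (Fin n) K} (hp : p.IsSymmetric) (hq : q.IsSymmetric) :
    (p * q).IsSymmetric := fun e => by rw [map_mul, hp e, hq e]

lemma isSymm_zero : (0 : MvPolynomial (Fin n) K).IsSymmetric := fun e => map_zero _

lemma isSymm_sum {ι : Type*} (s : Finset ι) (f : ι → MvPolynomial (Fin n) K)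
    (h : ∀ i ∈ s, (f i).IsSymmetric) : (∑ i ∈ s, f i).IsSymmetric := fun e => by
  rw [map_sum]
  exact Finset.sum_congr rfl fun i hi => h i hi e

section Indep

variable (hD : IsDemazure D)
variable (hDw : ∀ (ω : Equiv.Perm (Fin n)) (L : List (Fin (n - 1))),
      wordProd L = ω → invCount ω = L.length →
      ∀ P, Dw ω P = L.foldr (fun i Q => D i Q) P)

include hD hDw

/-- nonzero pairing forces either `u = v` or `ℓ(u) < ℓ(v)` (paired against `S (v w0)`). -/
lemma pair_support {u v : Equiv.Perm (Fin n)} (huv : u ≠ v)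
    (hcond : invCount (u⁻¹ * (v * w0 n)) = invCount u + invCount (v * w0 n)) :
    invCount u < invCount v := by
  obtain ⟨hle, heq⟩ := pair_S_S_cond_length hD hDw hcond
  have h1 := invCount_mul_w0 (n := n) v
  rcases lt_or_eq_of_le hle with h | h
  · omega
  · exfalso
    exact huv (mul_right_cancel (heq h).symm)

lemma lambda_indep (f : Equiv.Perm (Fin n) → MvPolynomial (Fin n) K)
    (hf : ∀ v, (f v).IsSymmetric)
    (h : ∑ v : Equiv.Perm (Fin n), f v * Dw v (stair n K) = 0) : ∀ v, f v = 0 := by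
  suffices hs : ∀ (k : ℕ) v, invCount v = k → f v = 0 from fun v => hs _ v rfl
  intro k
  induction k using Nat.strong_induction_on with
  | _ k IH =>
    intro v hk
    have h0 : ∑ u : Equiv.Perm (Fin n),
        f u * Dw (w0 n) (Dw u (stair n K) * Dw (v * w0 n) (stair n K)) = 0 := by
      have h1 := congrArg (fun Z => Dw (w0 n) (Z * Dw (v * w0 n) (stair n K))) h
      simp only [zero_mul, Dw_zero hD hDw] at h1
      rw [← h1, Finset.sum_mul, Dw_sum hD hDw]
      apply Finset.sum_congr rfl
      intro u _
      rw [mul_assoc, Dw_symm_mul hD hDw _ (hf u)]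
    rw [Finset.sum_eq_single_of_mem v (Finset.mem_univ v) ?_] at h0
    · rw [pair_S_S_diag hD hDw, mul_one] at h0
      exact h0
    · intro u _ huv
      rw [pair_S_S hD hDw]
      by_cases hcond : invCount (u⁻¹ * (v * w0 n)) = invCount u + invCount (v * w0 n)
      · have hlt := pair_support hD hDw huv hcond
        rw [IH (invCount u) (by omega) u rfl, zero_mul]
      · rw [if_neg hcond, mul_zero]

end Indep

/-- the triangular system of candidate coefficients -/
noncomputable def gfun (Dw : Equiv.Perm (Fin n) → MvPolynomial (Fin n) K → MvPolynomial (Fin n) K)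
    (P0 : MvPolynomial (Fin n) K) (v : Equiv.Perm (Fin n)) : MvPolynomial (Fin n) K :=
  Dw (w0 n) (P0 * Dw (v * w0 n) (stair n K)) -
    ∑ u ∈ (Finset.univ.filter (fun u => invCount u < invCount v)).attach,
      (if invCount (u.1⁻¹ * (v * w0 n)) = invCount u.1 + invCount (v * w0 n)
       then gfun Dw P0 u.1 * Dw (w0 n) (stair n K * Dw (u.1⁻¹ * (v * w0 n)) (stair n K))
       else 0)
termination_by invCount v
decreasing_by exact (Finset.mem_filter.mp u.2).2

section Extract

variable (hD : IsDemazure D)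
variable (hDw : ∀ (ω : Equiv.Perm (Fin n)) (L : List (Fin (n - 1))),
      wordProd L = ω → invCount ω = L.length →
      ∀ P, Dw ω P = L.foldr (fun i Q => D i Q) P)

include hD hDw

lemma gfun_symmetric (P0 : MvPolynomial (Fin n) K) (v : Equiv.Perm (Fin n)) :
    (gfun Dw P0 v).IsSymmetric := by
  suffices hs : ∀ (k : ℕ) v, invCount v = k → (gfun Dw P0 v).IsSymmetric from fun e => hs _ v rfl e
  intro k
  induction k using Nat.strong_induction_on with
  | _ k IH =>
    intro v hk
    rw [gfun]
    apply isSymm_sub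
    · exact Dw_w0_isSymmetric hD hDw _
    · apply isSymm_sum
      intro u _
      by_cases hcond : invCount (u.1⁻¹ * (v * w0 n)) = invCount u.1 + invCount (v * w0 n)
      · rw [if_pos hcond]
        apply isSymm_mul
        · exact IH (invCount u.1) (by have := (Finset.mem_filter.mp u.2).2; omega) u.1 rfl
        · exact Dw_w0_isSymmetric hD hDw _
      · rw [if_neg hcond]
        exact isSymm_zero

lemma extraction (s P0 : MvPolynomial (Fin n) K) (f : Equiv.Perm (Fin n) → MvPolynomial (Fin n) K)
    (hs : s.IsSymmetric) (hf : ∀ v, (f v).IsSymmetric)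
    (heq : s * P0 = ∑ v : Equiv.Perm (Fin n), f v * Dw v (stair n K)) :
    ∀ v, f v = s * gfun Dw P0 v := by
  suffices hsuf : ∀ (k : ℕ) v, invCount v = k → f v = s * gfun Dw P0 v from fun v => hsuf _ v rfl
  intro k
  induction k using Nat.strong_induction_on with
  | _ k IH =>
    intro v hk
    -- pair both sides of heq with S(v w0)
    have h0 : s * Dw (w0 n) (P0 * Dw (v * w0 n) (stair n K)) = ∑ u : Equiv.Perm (Fin n),
        f u * Dw (w0 n) (Dw u (stair n K) * Dw (v * w0 n) (stair n K)) := by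
      have h1 := congrArg (fun Z => Dw (w0 n) (Z * Dw (v * w0 n) (stair n K))) heq
      rw [mul_assoc, Dw_symm_mul hD hDw _ hs, Finset.sum_mul, Dw_sum hD hDw] at h1
      rw [h1]
      apply Finset.sum_congr rfl
      intro u _
      rw [mul_assoc, Dw_symm_mul hD hDw _ (hf u)]
    -- split the sum
    rw [← Finset.add_sum_erase Finset.univ _ (Finset.mem_univ v),
      pair_S_S_diag hD hDw, mul_one] at h0
    have hsplit : ∑ u ∈ Finset.univ.erase v,
        f u * Dw (w0 n) (Dw u (stair n K) * Dw (v * w0 n) (stair n K))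
        = ∑ u ∈ Finset.univ.filter (fun u => invCount u < invCount v),
        f u * Dw (w0 n) (Dw u (stair n K) * Dw (v * w0 n) (stair n K)) := by
      symm
      apply Finset.sum_subset
      · intro u hu
        have := (Finset.mem_filter.mp hu).2
        rw [Finset.mem_erase]
        refine ⟨?_, Finset.mem_univ u⟩
        intro he
        rw [he] at this
        omega
      · intro u hu hnot
        have huv : u ≠ v := (Finset.mem_erase.mp hu).1
        rw [pair_S_S hD hDw]
        by_cases hcond : invCount (u⁻¹ * (v * w0 n)) = invCount u + invCount (v * w0 n)
        · exfalso
          apply hnot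
          rw [Finset.mem_filter]
          exact ⟨Finset.mem_univ u, pair_support hD hDw huv hcond⟩
        · rw [if_neg hcond, mul_zero]
    rw [hsplit] at h0
    -- rewrite each summand via the inductive hypothesis
    have hsum : ∑ u ∈ Finset.univ.filter (fun u => invCount u < invCount v),
        f u * Dw (w0 n) (Dw u (stair n K) * Dw (v * w0 n) (stair n K))
        = s * ∑ u ∈ (Finset.univ.filter (fun u => invCount u < invCount v)).attach,
          (if invCount (u.1⁻¹ * (v * w0 n)) = invCount u.1 + invCount (v * w0 n)
           then gfun Dw P0 u.1 * Dw (w0 n) (stair n K * Dw (u.1⁻¹ * (v * w0 n)) (stair n K))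
           else 0) := by
      rw [Finset.mul_sum, ← Finset.sum_attach (Finset.univ.filter
        (fun u => invCount u < invCount v))
        (fun u => f u * Dw (w0 n) (Dw u (stair n K) * Dw (v * w0 n) (stair n K)))]
      apply Finset.sum_congr rfl
      intro u _
      have hlt := (Finset.mem_filter.mp u.2).2
      rw [pair_S_S hD hDw, IH (invCount u.1) (by omega) u.1 rfl]
      by_cases hcond : invCount (u.1⁻¹ * (v * w0 n)) = invCount u.1 + invCount (v * w0 n)
      · rw [if_pos hcond, if_pos hcond]
        ring
      · rw [if_neg hcond, if_neg hcond, mul_zero, mul_zero]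
    rw [hsum] at h0
    rw [gfun, mul_sub]
    rw [eq_sub_iff_add_eq]
    exact h0.symm

end Extract

end DemBasis

namespace DemBasis

variable {K : Type} [Field K] {n : ℕ}

lemma fixed_smul (x : FixedPoints.subfield (Equiv.Perm (Fin n))
    (FractionRing (MvPolynomial (Fin n) K))) (g : Equiv.Perm (Fin n)) :
    g • (x : FractionRing (MvPolynomial (Fin n) K)) = x := x.2 g

end DemBasis


/-- The set `{∂_ω(x_2 x_3² ⋯ x_n^{n-1}) : ω ∈ S_n}` is a basis of
`P_n = K[x_1,…,x_n]` as a module over `P_n^{S_n}`.  Here `Dw ω` is `∂_ω`, the composition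
of Demazure operators along any reduced word for `ω` (a word whose length equals the
number of inversions of its product), applied in word order. -/
theorem demazure_staircase_basis {K : Type} [Field K] (n : ℕ) (hn : 1 ≤ n)
    (D : Fin (n - 1) → MvPolynomial (Fin n) K → MvPolynomial (Fin n) K)
    (hD : IsDemazure D)
    (Dw : Equiv.Perm (Fin n) → MvPolynomial (Fin n) K → MvPolynomial (Fin n) K)
    (hDw : ∀ (ω : Equiv.Perm (Fin n)) (L : List (Fin (n - 1))),
      wordProd L = ω → invCount ω = L.length →
      ∀ P, Dw ω P = L.foldr (fun i Q => D i Q) P) :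
    LinearIndependent (↥(symmetricSubalgebra (Fin n) K))
        (fun ω : Equiv.Perm (Fin n) => Dw ω (∏ i : Fin n, X i ^ i.val)) ∧
    Submodule.span (↥(symmetricSubalgebra (Fin n) K))
        (Set.range (fun ω : Equiv.Perm (Fin n) => Dw ω (∏ i : Fin n, X i ^ i.val))) = ⊤ := by
  classical
  constructor
  · rw [Fintype.linearIndependent_iff]
    intro c hc v
    have hc' : ∑ u : Equiv.Perm (Fin n),
        ((c u : MvPolynomial (Fin n) K)) * Dw u (DemBasis.stair n K) = 0 := by
      rw [← hc]
      apply Finset.sum_congr rfl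
      intro u _
      rfl
    have hz := DemBasis.lambda_indep hD hDw (fun u => (c u : MvPolynomial (Fin n) K))
      (fun u => (mem_symmetricSubalgebra _).mp (c u).2) hc' v
    exact Subtype.ext hz
  · rw [eq_top_iff]
    intro P0 _
    have hsmulF : ∀ (a : FixedPoints.subfield (Equiv.Perm (Fin n))
        (FractionRing (MvPolynomial (Fin n) K)))
        (y : FractionRing (MvPolynomial (Fin n) K)), a • y = (a : FractionRing (MvPolynomial (Fin n) K)) * y :=
      fun a y => rfl
    have hFind : LinearIndependent (FixedPoints.subfield (Equiv.Perm (Fin n))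
        (FractionRing (MvPolynomial (Fin n) K)))
        (fun v : Equiv.Perm (Fin n) => algebraMap (MvPolynomial (Fin n) K)
          (FractionRing (MvPolynomial (Fin n) K)) (Dw v (DemBasis.stair n K))) := by
      rw [Fintype.linearIndependent_iff]
      intro c hc v
      obtain ⟨s, q, hsSym, hs0, hqSym, hkey⟩ := DemBasis.clear_denominators
        (fun v => (c v : FractionRing (MvPolynomial (Fin n) K)))
        (fun v g => DemBasis.fixed_smul (c v) g)
      have h2 : (∑ u : Equiv.Perm (Fin n), q u * Dw u (DemBasis.stair n K)) = 0 := by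
        apply IsFractionRing.injective (MvPolynomial (Fin n) K)
          (FractionRing (MvPolynomial (Fin n) K))
        rw [map_sum, map_zero]
        calc ∑ u : Equiv.Perm (Fin n),
              algebraMap _ (FractionRing (MvPolynomial (Fin n) K)) (q u * Dw u (DemBasis.stair n K))
            = algebraMap _ (FractionRing (MvPolynomial (Fin n) K)) s
              * ∑ u : Equiv.Perm (Fin n), (c u : FractionRing (MvPolynomial (Fin n) K)) *
                algebraMap _ (FractionRing (MvPolynomial (Fin n) K)) (Dw u (DemBasis.stair n K)) := by
              rw [Finset.mul_sum]
              apply Finset.sum_congr rfl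
              intro u _
              rw [map_mul, ← mul_assoc, hkey u]
          _ = 0 := by
              have h3 : ∑ u : Equiv.Perm (Fin n), (c u : FractionRing (MvPolynomial (Fin n) K))
                  * algebraMap _ (FractionRing (MvPolynomial (Fin n) K))
                    (Dw u (DemBasis.stair n K)) = 0 := by
                rw [← hc]
                apply Finset.sum_congr rfl
                intro u _
                rw [hsmulF]
              rw [h3, mul_zero]
      have hq0 := DemBasis.lambda_indep hD hDw q hqSym h2 v
      have h4 : algebraMap (MvPolynomial (Fin n) K) (FractionRing (MvPolynomial (Fin n) K)) s
          * (c v : FractionRing (MvPolynomial (Fin n) K)) = 0 := by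
        rw [hkey v, hq0, map_zero]
      have hsne : algebraMap (MvPolynomial (Fin n) K) (FractionRing (MvPolynomial (Fin n) K)) s ≠ 0 := by
        intro hz
        exact hs0 (IsFractionRing.injective _ _ (by rw [hz, map_zero]))
      exact Subtype.ext ((mul_eq_zero.mp h4).resolve_left hsne)
    have hcard : Fintype.card (Equiv.Perm (Fin n))
        = Module.finrank (FixedPoints.subfield (Equiv.Perm (Fin n))
            (FractionRing (MvPolynomial (Fin n) K))) (FractionRing (MvPolynomial (Fin n) K)) :=
      (FixedPoints.finrank_eq_card (Equiv.Perm (Fin n)) (FractionRing (MvPolynomial (Fin n) K))).symm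
    set bas := basisOfLinearIndependentOfCardEqFinrank hFind hcard with hbas
    have hco : ⇑bas = fun v : Equiv.Perm (Fin n) =>
        algebraMap (MvPolynomial (Fin n) K) (FractionRing (MvPolynomial (Fin n) K))
          (Dw v (DemBasis.stair n K)) :=
      coe_basisOfLinearIndependentOfCardEqFinrank _ _
    have hexp := bas.sum_repr (algebraMap (MvPolynomial (Fin n) K)
      (FractionRing (MvPolynomial (Fin n) K)) P0)
    obtain ⟨s, q, hsSym, hs0, hqSym, hkey⟩ := DemBasis.clear_denominators
      (fun v => (bas.repr (algebraMap (MvPolynomial (Fin n) K)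
        (FractionRing (MvPolynomial (Fin n) K)) P0) v : FractionRing (MvPolynomial (Fin n) K)))
      (fun v g => DemBasis.fixed_smul _ g)
    have heq : s * P0 = ∑ v : Equiv.Perm (Fin n), q v * Dw v (DemBasis.stair n K) := by
      apply IsFractionRing.injective (MvPolynomial (Fin n) K)
        (FractionRing (MvPolynomial (Fin n) K))
      rw [map_mul, map_sum, ← hexp, Finset.mul_sum]
      apply Finset.sum_congr rfl
      intro v _
      rw [hsmulF, hco, map_mul, ← mul_assoc, hkey v]
    have hfv := DemBasis.extraction hD hDw s P0 q hsSym hqSym heq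
    have hP0 : P0 = ∑ v : Equiv.Perm (Fin n),
        DemBasis.gfun Dw P0 v * Dw v (DemBasis.stair n K) := by
      apply mul_left_cancel₀ hs0
      rw [heq, Finset.mul_sum]
      apply Finset.sum_congr rfl
      intro v _
      rw [hfv v]
      ring
    rw [hP0]
    apply Submodule.sum_mem
    intro v _
    have hmem : DemBasis.gfun Dw P0 v ∈ symmetricSubalgebra (Fin n) K :=
      (mem_symmetricSubalgebra _).mpr (DemBasis.gfun_symmetric hD hDw P0 v)
    exact Submodule.smul_mem _
      (⟨DemBasis.gfun Dw P0 v, hmem⟩ : ↥(symmetricSubalgebra (Fin n) K))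
      (Submodule.subset_span (Set.mem_range_self v))
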